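/- Let n, r ≥ 1 and let R = ℂ[X_{m,i,j} : 1 ≤ m ≤ n, 1 ≤ i, j ≤ r] be the polynomial ring whose generator X_{m,i,j} represents the (i,j) entry of the m-th residue matrix φ_m. Define the Lie–Poisson bracket {·,·} : R × R → R by {F, G} = Σ_{m=1}^{n} Σ_{i,j,k,l=1}^{r} (∂F/∂X_{m,i,j})·(∂G/∂X_{m,k,l})·(δ_{jk} X_{m,i,l} − δ_{il} X_{m,k,j}), and extend it ℂ[z,w]-bilinearly to polynomials in auxiliary variables z, w. Let p_1, …, p_n be distinct complex numbers, let φ_m ∈ M_r(R) be the matrix with entries (φ_m)_{ij} = X_{m,i,j}, and let Φ(z) = Σ_{m=1}^n φ_m · Π_{j≠m}(z − p_j) ∈ M_r(R[z]). Then for all integers a, b ≥ 1, {Tr(Φ(z)^a), Tr(Φ(w)^b)} = 0 in R[z, w]; equivalently, every coefficient in z of Tr(Φ(z)^a) Poisson-commutes with every coefficient in w of Tr(Φ(w)^b). In particular the components of the Hitchin map h : X^r_n(α) → B pairwise Poisson commute. -/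

import Mathlib

open MvPolynomial

/-- The Lie–Poisson bracket on the coordinate ring `R = ℂ[X_{m,i,j}]` of `n` copies of
`gl_r*`: `{F, G} = Σ_{m,i,j,k,l} (∂F/∂X_{m,i,j})(∂G/∂X_{m,k,l})(δ_{jk} X_{m,i,l} - δ_{il} X_{m,k,j})`. -/
noncomputable def liePoissonBracket (n r : ℕ)
    (F G : MvPolynomial (Fin n × Fin r × Fin r) ℂ) :
    MvPolynomial (Fin n × Fin r × Fin r) ℂ :=
  ∑ m : Fin n, ∑ i : Fin r, ∑ j : Fin r, ∑ k : Fin r, ∑ l : Fin r,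
    pderiv (m, i, j) F * pderiv (m, k, l) G *
      ((if j = k then X (m, i, l) else 0) - (if i = l then X (m, k, j) else 0))

section DerivMatrix

variable {R A : Type*} [CommSemiring R] [CommRing A] [Algebra R A]
variable {N : Type*} [Fintype N] [DecidableEq N]

/-- Apply a derivation entrywise to a matrix. -/
noncomputable def mapD (D : Derivation R A A) (M : Matrix N N A) : Matrix N N A :=
  Matrix.of fun i j => D (M i j)

lemma mapD_apply (D : Derivation R A A) (M : Matrix N N A) (i j : N) :
    mapD D M i j = D (M i j) := rfl

lemma mapD_mul (D : Derivation R A A) (M P : Matrix N N A) :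
    mapD D (M * P) = mapD D M * P + M * mapD D P := by
  ext i j
  simp only [mapD, Matrix.of_apply, Matrix.mul_apply, Matrix.add_apply, map_sum,
    Derivation.leibniz, smul_eq_mul, ← Finset.sum_add_distrib]
  refine Finset.sum_congr rfl fun k _ => ?_
  ring

lemma mapD_one (D : Derivation R A A) : mapD D (1 : Matrix N N A) = 0 := by
  ext i j
  simp only [mapD, Matrix.of_apply, Matrix.one_apply]
  split <;> simp

lemma mapD_pow (D : Derivation R A A) (M : Matrix N N A) (k : ℕ) :
    mapD D (M ^ k) = ∑ i ∈ Finset.range k, M ^ i * mapD D M * M ^ (k - 1 - i) := by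
  induction k with
  | zero => simp [mapD_one]
  | succ k ih =>
    rw [pow_succ, mapD_mul, ih, Finset.sum_range_succ, Finset.sum_mul]
    congr 1
    · refine Finset.sum_congr rfl fun i hi => ?_
      rw [Finset.mem_range] at hi
      have he : k - 1 - i + 1 = k + 1 - 1 - i := by omega
      rw [mul_assoc, mul_assoc, ← pow_succ, he, mul_assoc]
    · simp [Nat.sub_self]

lemma derivation_trace (D : Derivation R A A) (M : Matrix N N A) :
    D (Matrix.trace M) = Matrix.trace (mapD D M) := by
  simp [Matrix.trace, mapD, Matrix.diag, map_sum]

lemma derivation_trace_pow (D : Derivation R A A) (M : Matrix N N A) (k : ℕ) :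
    D (Matrix.trace (M ^ (k + 1))) = (k + 1) • Matrix.trace (M ^ k * mapD D M) := by
  rw [derivation_trace, mapD_pow, Matrix.trace_sum]
  have h : ∀ i ∈ Finset.range (k + 1),
      Matrix.trace (M ^ i * mapD D M * M ^ (k + 1 - 1 - i)) =
        Matrix.trace (M ^ k * mapD D M) := by
    intro i hi
    rw [Finset.mem_range] at hi
    rw [Matrix.trace_mul_cycle, ← pow_add]
    have he : k + 1 - 1 - i + i = k := by omega
    rw [he]
  rw [Finset.sum_congr rfl h, Finset.sum_const, Finset.card_range]

lemma trace_mul_stdBasisMatrix (M : Matrix N N A) (i j : N) (c : A) :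
    Matrix.trace (M * Matrix.single i j c) = M j i * c := by
  simp [Matrix.trace, Matrix.diag, Matrix.mul_apply, Matrix.single,
    mul_ite, mul_zero, ite_and, Finset.sum_ite_eq, Finset.sum_ite_eq']

lemma key1 (A' B P : Matrix N N A) :
    (∑ i : N, ∑ j : N, ∑ k : N, ∑ l : N,
      A' j i * B l k * (if j = k then P i l else 0)) = Matrix.trace (B * A' * P) := by
  have step : ∀ i j : N, (∑ k : N, ∑ l : N, A' j i * B l k * (if j = k then P i l else 0))
      = ∑ l : N, A' j i * B l j * P i l := by
    intro i j
    rw [Finset.sum_comm]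
    refine Finset.sum_congr rfl fun l _ => ?_
    simp [mul_ite, mul_zero, Finset.sum_ite_eq]
  calc (∑ i : N, ∑ j : N, ∑ k : N, ∑ l : N,
          A' j i * B l k * (if j = k then P i l else 0))
      = ∑ i : N, ∑ j : N, ∑ l : N, A' j i * B l j * P i l := by
        exact Finset.sum_congr rfl fun i _ => Finset.sum_congr rfl fun j _ => step i j
    _ = ∑ i : N, ∑ l : N, ∑ j : N, A' j i * B l j * P i l := by
        exact Finset.sum_congr rfl fun i _ => Finset.sum_comm
    _ = ∑ l : N, ∑ i : N, ∑ j : N, A' j i * B l j * P i l := Finset.sum_comm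
    _ = Matrix.trace (B * A' * P) := by
        simp only [Matrix.trace, Matrix.diag, Matrix.mul_apply, Finset.sum_mul]
        refine Finset.sum_congr rfl fun l _ => Finset.sum_congr rfl fun u _ =>
          Finset.sum_congr rfl fun v _ => by ring

lemma key2 (A' B P : Matrix N N A) :
    (∑ i : N, ∑ j : N, ∑ k : N, ∑ l : N,
      A' j i * B l k * (if i = l then P k j else 0)) = Matrix.trace (A' * B * P) := by
  have step : ∀ i j k : N, (∑ l : N, A' j i * B l k * (if i = l then P k j else 0))
      = A' j i * B i k * P k j := by
    intro i j k
    simp [mul_ite, mul_zero, Finset.sum_ite_eq]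
  calc (∑ i : N, ∑ j : N, ∑ k : N, ∑ l : N,
          A' j i * B l k * (if i = l then P k j else 0))
      = ∑ i : N, ∑ j : N, ∑ k : N, A' j i * B i k * P k j := by
        exact Finset.sum_congr rfl fun i _ => Finset.sum_congr rfl fun j _ =>
          Finset.sum_congr rfl fun k _ => step i j k
    _ = ∑ j : N, ∑ i : N, ∑ k : N, A' j i * B i k * P k j := Finset.sum_comm
    _ = ∑ j : N, ∑ k : N, ∑ i : N, A' j i * B i k * P k j := by
        exact Finset.sum_congr rfl fun j _ => Finset.sum_comm
    _ = Matrix.trace (A' * B * P) := by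
        simp only [Matrix.trace, Matrix.diag, Matrix.mul_apply, Finset.sum_mul]

lemma key_sum (A' B P : Matrix N N A) :
    (∑ i : N, ∑ j : N, ∑ k : N, ∑ l : N,
      A' j i * B l k * ((if j = k then P i l else 0) - (if i = l then P k j else 0)))
      = Matrix.trace (B * A' * P) - Matrix.trace (A' * B * P) := by
  rw [← key1 A' B P, ← key2 A' B P]
  simp only [mul_sub, ← Finset.sum_sub_distrib]


end DerivMatrix


section Part3
set_option linter.unusedSectionVars false
set_option maxHeartbeats 1000000

variable (n r : ℕ)

abbrev Ix (n r : ℕ) := Fin n × Fin r × Fin r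
abbrev TT (n r : ℕ) := MvPolynomial (Fin 2 ⊕ Ix n r) ℂ

noncomputable def qq (p : Fin n → ℂ) (t : Fin 2) (m : Fin n) : TT n r :=
  ∏ j ∈ Finset.univ.erase m, (X (Sum.inl t) - C (p j))

noncomputable def phiM (m : Fin n) : Matrix (Fin r) (Fin r) (TT n r) :=
  Matrix.of fun i j => X (Sum.inr (m, i, j))

noncomputable def Psi (p : Fin n → ℂ) (t : Fin 2) : Matrix (Fin r) (Fin r) (TT n r) :=
  ∑ m : Fin n, qq n r p t m • phiM n r m

lemma pderiv_inr_rename_inl (q : MvPolynomial (Fin 2) ℂ) (u : Ix n r) :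
    pderiv (Sum.inr u) (rename (Sum.inl : Fin 2 → Fin 2 ⊕ Ix n r) q) = 0 := by
  apply pderiv_eq_zero_of_notMem_vars
  intro hmem
  have := vars_rename (Sum.inl : Fin 2 → Fin 2 ⊕ Ix n r) q hmem
  simp only [Finset.mem_image] at this
  obtain ⟨t, -, ht⟩ := this
  exact Sum.inl_ne_inr ht

lemma qq_eq_rename (p : Fin n → ℂ) (t : Fin 2) (m : Fin n) :
    qq n r p t m =
      rename (Sum.inl : Fin 2 → Fin 2 ⊕ Ix n r)
        (∏ j ∈ Finset.univ.erase m, (X t - C (p j))) := by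
  simp [qq, map_prod]

lemma pderiv_inr_qq (p : Fin n → ℂ) (t : Fin 2) (m : Fin n) (u : Ix n r) :
    pderiv (Sum.inr u) (qq n r p t m) = 0 := by
  rw [qq_eq_rename]; exact pderiv_inr_rename_inl n r _ u

lemma mapD_Psi (p : Fin n → ℂ) (t : Fin 2) (m : Fin n) (i j : Fin r) :
    mapD (pderiv (Sum.inr (m, i, j))) (Psi n r p t) =
      qq n r p t m • Matrix.single i j (1 : TT n r) := by
  refine Matrix.ext fun i' j' => ?_
  simp only [mapD, Matrix.of_apply, Psi, Matrix.sum_apply, Matrix.smul_apply, phiM,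
    smul_eq_mul, map_sum]
  simp only [pderiv_mul, pderiv_inr_qq, zero_mul, zero_add, pderiv_X, Pi.single_apply,
    Sum.inr.injEq, Prod.mk.injEq, mul_ite, mul_one, mul_zero, Matrix.single,
    Matrix.of_apply]
  by_cases h : i' = i ∧ j' = j
  · obtain ⟨rfl, rfl⟩ := h
    simp [Finset.sum_ite_eq']
  · have h' : ¬(i = i' ∧ j = j') := by
      rintro ⟨rfl, rfl⟩; exact h ⟨rfl, rfl⟩
    rw [if_neg h', Finset.sum_eq_zero]
    intro m' _
    rw [if_neg]
    rintro ⟨-, h2⟩; exact h h2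

lemma pderiv_trace_Psi_pow (p : Fin n → ℂ) (t : Fin 2) (m : Fin n) (i j : Fin r) (k : ℕ) :
    pderiv (Sum.inr (m, i, j)) (Matrix.trace (Psi n r p t ^ (k + 1))) =
      ((k : TT n r) + 1) * (qq n r p t m * (Psi n r p t ^ k) j i) := by
  rw [derivation_trace_pow, mapD_Psi, Matrix.mul_smul, Matrix.trace_smul,
    trace_mul_stdBasisMatrix, smul_eq_mul, mul_one]
  rw [nsmul_eq_mul]
  push_cast
  ring

noncomputable def BRT (F G : TT n r) : TT n r :=
  ∑ m : Fin n, ∑ i : Fin r, ∑ j : Fin r, ∑ k : Fin r, ∑ l : Fin r,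
    pderiv (Sum.inr (m, i, j)) F * pderiv (Sum.inr (m, k, l)) G *
      ((if j = k then X (Sum.inr (m, i, l)) else 0) -
        (if i = l then X (Sum.inr (m, k, j)) else 0))

lemma BRT_trace_eq (p : Fin n → ℂ) (a' b' : ℕ) :
    BRT n r (Matrix.trace (Psi n r p 0 ^ (a' + 1))) (Matrix.trace (Psi n r p 1 ^ (b' + 1)))
      = (((a' : TT n r) + 1) * ((b' : TT n r) + 1)) *
        ∑ m : Fin n, qq n r p 0 m * qq n r p 1 m *
          (Matrix.trace (Psi n r p 1 ^ b' * Psi n r p 0 ^ a' * phiM n r m)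
            - Matrix.trace (Psi n r p 0 ^ a' * Psi n r p 1 ^ b' * phiM n r m)) := by
  unfold BRT
  simp only [pderiv_trace_Psi_pow]
  rw [Finset.mul_sum]
  refine Finset.sum_congr rfl fun m _ => ?_
  rw [← key_sum (Psi n r p 0 ^ a') (Psi n r p 1 ^ b') (phiM n r m)]
  simp only [Finset.mul_sum, phiM, Matrix.of_apply]
  refine Finset.sum_congr rfl fun i _ => Finset.sum_congr rfl fun j _ => ?_
  refine Finset.sum_congr rfl fun k _ => Finset.sum_congr rfl fun l _ => ?_
  ring

lemma sum_qq_trace (p : Fin n → ℂ) (t : Fin 2) (M : Matrix (Fin r) (Fin r) (TT n r)) :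
    (∑ m : Fin n, qq n r p t m * Matrix.trace (M * phiM n r m))
      = Matrix.trace (M * Psi n r p t) := by
  simp [Psi, Matrix.mul_sum, Matrix.mul_smul, Matrix.trace_smul, smul_eq_mul]

lemma BRT_trace_zero (p : Fin n → ℂ) (a' b' : ℕ) :
    BRT n r (Matrix.trace (Psi n r p 0 ^ (a' + 1)))
      (Matrix.trace (Psi n r p 1 ^ (b' + 1))) = 0 := by
  set Z : TT n r := X (Sum.inl 0) with hZ
  set W : TT n r := X (Sum.inl 1) with hW
  set A := Psi n r p 0 ^ a' with hA
  set B := Psi n r p 1 ^ b' with hB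
  set QZ : TT n r := ∏ j : Fin n, (Z - C (p j)) with hQZ
  set QW : TT n r := ∏ j : Fin n, (W - C (p j)) with hQW
  have hm : ∀ m : Fin n, (W - Z) * (qq n r p 0 m * qq n r p 1 m)
      = QW * qq n r p 0 m - QZ * qq n r p 1 m := by
    intro m
    have hz : QZ = (Z - C (p m)) * qq n r p 0 m :=
      (Finset.mul_prod_erase Finset.univ _ (Finset.mem_univ m)).symm
    have hw : QW = (W - C (p m)) * qq n r p 1 m :=
      (Finset.mul_prod_erase Finset.univ _ (Finset.mem_univ m)).symm
    rw [hz, hw]; ring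
  have h2 : (W - Z) *
      (∑ m : Fin n, qq n r p 0 m * qq n r p 1 m *
        (Matrix.trace (B * A * phiM n r m) - Matrix.trace (A * B * phiM n r m))) = 0 := by
    rw [Finset.mul_sum]
    have step : ∀ m : Fin n, (W - Z) * (qq n r p 0 m * qq n r p 1 m *
        (Matrix.trace (B * A * phiM n r m) - Matrix.trace (A * B * phiM n r m)))
        = QW * (qq n r p 0 m * Matrix.trace (B * A * phiM n r m))
          - QW * (qq n r p 0 m * Matrix.trace (A * B * phiM n r m))
          - QZ * (qq n r p 1 m * Matrix.trace (B * A * phiM n r m))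
          + QZ * (qq n r p 1 m * Matrix.trace (A * B * phiM n r m)) := by
      intro m
      have := hm m
      linear_combination (Matrix.trace (B * A * phiM n r m)
        - Matrix.trace (A * B * phiM n r m)) * this
    rw [Finset.sum_congr rfl fun m _ => step m]
    simp only [Finset.sum_add_distrib, Finset.sum_sub_distrib, ← Finset.mul_sum]
    rw [sum_qq_trace, sum_qq_trace, sum_qq_trace, sum_qq_trace]
    have c1 : Matrix.trace (B * A * Psi n r p 0) = Matrix.trace (B * Psi n r p 0 ^ (a' + 1)) := by
      rw [Matrix.mul_assoc, hA, ← pow_succ]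
    have c2 : Matrix.trace (A * B * Psi n r p 0) = Matrix.trace (B * Psi n r p 0 ^ (a' + 1)) := by
      rw [Matrix.trace_mul_cycle, hA, ← pow_succ', Matrix.trace_mul_comm]
    have c3 : Matrix.trace (B * A * Psi n r p 1) = Matrix.trace (A * Psi n r p 1 ^ (b' + 1)) := by
      rw [Matrix.trace_mul_cycle, hB, ← pow_succ', Matrix.trace_mul_comm]
    have c4 : Matrix.trace (A * B * Psi n r p 1) = Matrix.trace (A * Psi n r p 1 ^ (b' + 1)) := by
      rw [Matrix.mul_assoc, hB, ← pow_succ]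
    rw [c1, c2, c3, c4]
    ring
  have h3 : (W - Z) * BRT n r (Matrix.trace (Psi n r p 0 ^ (a' + 1)))
      (Matrix.trace (Psi n r p 1 ^ (b' + 1))) = 0 := by
    rw [BRT_trace_eq, mul_left_comm, h2, mul_zero]
  have hne : (W - Z) ≠ 0 := by
    rw [sub_ne_zero, hW, hZ]
    exact fun h => absurd ((X_inj _ _).mp h) (by simp)
  exact (mul_eq_zero.mp h3).resolve_left hne

lemma BRT_zero_left (G : TT n r) : BRT n r 0 G = 0 := by
  simp [BRT]

lemma BRT_zero_right (F : TT n r) : BRT n r F 0 = 0 := by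
  simp [BRT]

lemma BRT_add_left (F₁ F₂ G : TT n r) :
    BRT n r (F₁ + F₂) G = BRT n r F₁ G + BRT n r F₂ G := by
  unfold BRT
  simp only [map_add, add_mul, Finset.sum_add_distrib]

lemma BRT_add_right (F G₁ G₂ : TT n r) :
    BRT n r F (G₁ + G₂) = BRT n r F G₁ + BRT n r F G₂ := by
  unfold BRT
  simp only [map_add, mul_add, add_mul, Finset.sum_add_distrib]

lemma BRT_sum_left {α : Type*} (s : Finset α) (f : α → TT n r) (G : TT n r) :
    BRT n r (∑ x ∈ s, f x) G = ∑ x ∈ s, BRT n r (f x) G := by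
  induction s using Finset.cons_induction with
  | empty => simpa using BRT_zero_left n r G
  | cons a s ha ih => rw [Finset.sum_cons, BRT_add_left, ih, Finset.sum_cons]

lemma BRT_sum_right {α : Type*} (s : Finset α) (F : TT n r) (g : α → TT n r) :
    BRT n r F (∑ x ∈ s, g x) = ∑ x ∈ s, BRT n r F (g x) := by
  induction s using Finset.cons_induction with
  | empty => simpa using BRT_zero_right n r F
  | cons a s ha ih => rw [Finset.sum_cons, BRT_add_right, ih, Finset.sum_cons]

lemma pderiv_inr_mul_xpow (u : Ix n r) (F : MvPolynomial (Ix n r) ℂ) (t : Fin 2) (c : ℕ) :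
    pderiv (Sum.inr u) (rename (Sum.inr : Ix n r → Fin 2 ⊕ Ix n r) F * X (Sum.inl t) ^ c)
      = rename (Sum.inr : Ix n r → Fin 2 ⊕ Ix n r) (pderiv u F) * X (Sum.inl t) ^ c := by
  rw [pderiv_mul]
  have hx : pderiv (Sum.inr u) ((X (Sum.inl t) : TT n r) ^ c) = 0 := by
    have h : ((X (Sum.inl t) : TT n r)) ^ c =
        rename (Sum.inl : Fin 2 → Fin 2 ⊕ Ix n r) ((X t : MvPolynomial (Fin 2) ℂ) ^ c) := by
      simp
    rw [h]
    exact pderiv_inr_rename_inl n r _ u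
  rw [hx, mul_zero, add_zero, pderiv_rename Sum.inr_injective]

lemma BRT_mul_special (F G : MvPolynomial (Ix n r) ℂ) (c d : ℕ) :
    BRT n r (rename (Sum.inr : Ix n r → Fin 2 ⊕ Ix n r) F * X (Sum.inl 0) ^ c)
        (rename (Sum.inr : Ix n r → Fin 2 ⊕ Ix n r) G * X (Sum.inl 1) ^ d)
      = X (Sum.inl 0) ^ c * X (Sum.inl 1) ^ d *
          rename (Sum.inr : Ix n r → Fin 2 ⊕ Ix n r) (liePoissonBracket n r F G) := by
  unfold BRT liePoissonBracket
  simp only [pderiv_inr_mul_xpow, map_sum, map_mul, map_sub,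
    apply_ite (rename (Sum.inr : Ix n r → Fin 2 ⊕ Ix n r)), map_zero, rename_X]
  simp only [Finset.mul_sum]
  refine Finset.sum_congr rfl fun m _ => Finset.sum_congr rfl fun i _ => ?_
  refine Finset.sum_congr rfl fun j _ => Finset.sum_congr rfl fun k _ => ?_
  refine Finset.sum_congr rfl fun l _ => ?_
  ring

lemma lie_zero_left (G : MvPolynomial (Ix n r) ℂ) : liePoissonBracket n r 0 G = 0 := by
  simp [liePoissonBracket]

lemma lie_zero_right (F : MvPolynomial (Ix n r) ℂ) : liePoissonBracket n r F 0 = 0 := by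
  simp [liePoissonBracket]

lemma E_rename (K : MvPolynomial (Ix n r) ℂ) :
    sumAlgEquiv ℂ (Fin 2) (Ix n r) (rename (Sum.inr : Ix n r → Fin 2 ⊕ Ix n r) K) = C K := by
  have h := AlgHom.congr_fun (sumAlgEquiv_comp_rename_inr ℂ (Fin 2) (Ix n r)) K
  simpa using h

lemma E_Xl (t : Fin 2) :
    sumAlgEquiv ℂ (Fin 2) (Ix n r) (X (Sum.inl t)) = X t := by
  rw [sumAlgEquiv_X_inl]

lemma finsupp_cond (c' d' c d : ℕ) :
    (Finsupp.single (0 : Fin 2) c' + Finsupp.single 1 d'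
      = Finsupp.single (0 : Fin 2) c + Finsupp.single 1 d) ↔ (c' = c ∧ d' = d) := by
  constructor
  · intro h
    have h0 := DFunLike.congr_fun h 0
    have h1 := DFunLike.congr_fun h 1
    simp only [Finsupp.add_apply, Finsupp.single_eq_same,
      Finsupp.single_eq_of_ne (show (1 : Fin 2) ≠ 0 by decide),
      Finsupp.single_eq_of_ne (show (0 : Fin 2) ≠ 1 by decide), add_zero, zero_add] at h0 h1
    exact ⟨h0, h1⟩
  · rintro ⟨rfl, rfl⟩; rfl

lemma coeff_term (c d c' d' : ℕ) (K : MvPolynomial (Ix n r) ℂ) :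
    MvPolynomial.coeff (Finsupp.single (0 : Fin 2) c + Finsupp.single 1 d)
      ((X (0 : Fin 2)) ^ c' * (X 1) ^ d' *
        (C K : MvPolynomial (Fin 2) (MvPolynomial (Ix n r) ℂ)))
      = if c' = c ∧ d' = d then K else 0 := by
  rw [X_pow_eq_monomial, X_pow_eq_monomial, monomial_mul, C_apply, monomial_mul,
    coeff_monomial, add_zero, one_mul, one_mul]
  by_cases h : c' = c ∧ d' = d
  · rw [if_pos ((finsupp_cond c' d' c d).mpr h), if_pos h]
  · rw [if_neg (fun hh => h ((finsupp_cond c' d' c d).mp hh)), if_neg h]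

end Part3

/-- The components of the Hitchin map pairwise Poisson commute: for the tautological
cleared-denominator Higgs field `Φ(z) = Σ_m φ_m Π_{j≠m}(z - p_j)` with entries the
generators `X_{m,i,j}` of `R`, every coefficient (in `z`) of `Tr(Φ(z)^a)` Poisson-commutes
with every coefficient (in `w`) of `Tr(Φ(w)^b)`, i.e. `{Tr(Φ(z)^a), Tr(Φ(w)^b)} = 0`. -/
theorem hitchin_map_components_poisson_commute (n r : ℕ) (hn : 1 ≤ n) (hrr : 1 ≤ r)
    (p : Fin n → ℂ) (hp : Function.Injective p)
    (φ : Fin n → Matrix (Fin r) (Fin r) (MvPolynomial (Fin n × Fin r × Fin r) ℂ))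
    (hφ : ∀ m i j, φ m i j = X (m, i, j))
    (Φ : Matrix (Fin r) (Fin r) (Polynomial (MvPolynomial (Fin n × Fin r × Fin r) ℂ)))
    (hΦ : Φ = ∑ m : Fin n,
        (∏ j ∈ Finset.univ.erase m, (Polynomial.X - Polynomial.C (C (p j) : MvPolynomial (Fin n × Fin r × Fin r) ℂ))) •
          (φ m).map (Polynomial.C :
            MvPolynomial (Fin n × Fin r × Fin r) ℂ →
              Polynomial (MvPolynomial (Fin n × Fin r × Fin r) ℂ)))
    (a b : ℕ) (ha : 1 ≤ a) (hb : 1 ≤ b) :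
    ∀ c d : ℕ,
      liePoissonBracket n r ((Matrix.trace (Φ ^ a)).coeff c)
        ((Matrix.trace (Φ ^ b)).coeff d) = 0 := by
  intro c d
  classical
  obtain ⟨a', rfl⟩ : ∃ a', a = a' + 1 := ⟨a - 1, by omega⟩
  obtain ⟨b', rfl⟩ : ∃ b', b = b' + 1 := ⟨b - 1, by omega⟩
  -- the evaluation ring homs sending z to the auxiliary variables
  have hmap : ∀ t : Fin 2,
      Φ.map (Polynomial.eval₂RingHom
        ((rename (Sum.inr : Ix n r → Fin 2 ⊕ Ix n r)).toRingHom) (X (Sum.inl t)))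
        = Psi n r p t := by
    intro t
    refine Matrix.ext fun i j => ?_
    rw [hΦ]
    simp only [Matrix.map_apply, Matrix.sum_apply, Matrix.smul_apply, smul_eq_mul, hφ,
      map_sum, map_mul, map_prod, map_sub, Polynomial.coe_eval₂RingHom,
      Polynomial.eval₂_X, Polynomial.eval₂_C, AlgHom.toRingHom_eq_coe,
      RingHom.coe_coe, rename_X, rename_C, Psi, phiM, qq, Matrix.of_apply]
    rw [Polynomial.eval₂_finset_sum]
    refine Finset.sum_congr rfl fun m _ => ?_
    rw [Polynomial.eval₂_mul, Polynomial.eval₂_C, Polynomial.eval₂_finset_prod]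
    simp only [Polynomial.eval₂_sub, Polynomial.eval₂_X, Polynomial.eval₂_C,
      RingHom.coe_coe, rename_X, rename_C]
  have hth : ∀ (t : Fin 2) (k : ℕ),
      (Polynomial.eval₂RingHom
        ((rename (Sum.inr : Ix n r → Fin 2 ⊕ Ix n r)).toRingHom) (X (Sum.inl t)))
        (Matrix.trace (Φ ^ k)) = Matrix.trace (Psi n r p t ^ k) := by
    intro t k
    have h1 : (Polynomial.eval₂RingHom
        ((rename (Sum.inr : Ix n r → Fin 2 ⊕ Ix n r)).toRingHom) (X (Sum.inl t)))
        (Matrix.trace (Φ ^ k)) = Matrix.trace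
          ((Polynomial.eval₂RingHom
            ((rename (Sum.inr : Ix n r → Fin 2 ⊕ Ix n r)).toRingHom)
              (X (Sum.inl t))).mapMatrix (Φ ^ k)) := by
      simp [Matrix.trace, Matrix.diag, RingHom.mapMatrix_apply, Matrix.map_apply, map_sum]
    rw [h1, map_pow, RingHom.mapMatrix_apply, hmap t]
  have hdec : ∀ (t : Fin 2) (g : Polynomial (MvPolynomial (Ix n r) ℂ)),
      (Polynomial.eval₂RingHom
        ((rename (Sum.inr : Ix n r → Fin 2 ⊕ Ix n r)).toRingHom) (X (Sum.inl t))) g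
        = ∑ c' ∈ g.support,
            rename (Sum.inr : Ix n r → Fin 2 ⊕ Ix n r) (g.coeff c') * X (Sum.inl t) ^ c' := by
    intro t g
    rw [Polynomial.coe_eval₂RingHom, Polynomial.eval₂_eq_sum, Polynomial.sum_def]
    rfl
  have h0 : BRT n r (Matrix.trace (Psi n r p 0 ^ (a' + 1)))
      (Matrix.trace (Psi n r p 1 ^ (b' + 1))) = 0 := BRT_trace_zero n r p a' b'
  rw [← hth 0 (a' + 1), ← hth 1 (b' + 1), hdec, hdec, BRT_sum_left] at h0
  simp only [BRT_sum_right, BRT_mul_special] at h0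
  have h1 := congrArg (fun q => MvPolynomial.coeff
    (Finsupp.single (0 : Fin 2) c + Finsupp.single 1 d)
      ((sumAlgEquiv ℂ (Fin 2) (Ix n r)) q)) h0
  simp only [map_sum, map_mul, map_pow, E_rename, E_Xl, map_zero, MvPolynomial.coeff_zero,
    MvPolynomial.coeff_sum, coeff_term] at h1
  by_cases hc : c ∈ (Matrix.trace (Φ ^ (a' + 1))).support
  · by_cases hd : d ∈ (Matrix.trace (Φ ^ (b' + 1))).support
    · have hin : ∀ c' ∈ (Matrix.trace (Φ ^ (a' + 1))).support,
          (∑ d' ∈ (Matrix.trace (Φ ^ (b' + 1))).support,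
            if c' = c ∧ d' = d then
              liePoissonBracket n r ((Matrix.trace (Φ ^ (a' + 1))).coeff c')
                ((Matrix.trace (Φ ^ (b' + 1))).coeff d') else 0)
            = if c' = c then
                liePoissonBracket n r ((Matrix.trace (Φ ^ (a' + 1))).coeff c')
                  ((Matrix.trace (Φ ^ (b' + 1))).coeff d) else 0 := by
        intro c' _
        by_cases hcc : c' = c
        · subst hcc
          simp only [true_and, if_pos rfl]
          rw [Finset.sum_ite_eq' ((Matrix.trace (Φ ^ (b' + 1))).support) d, if_pos hd]
          exact (if_pos trivial).symm
        · simp [hcc]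
      rw [Finset.sum_congr rfl hin,
        Finset.sum_ite_eq' ((Matrix.trace (Φ ^ (a' + 1))).support) c, if_pos hc] at h1
      exact h1
    · rw [Polynomial.notMem_support_iff] at hd
      rw [hd]
      exact lie_zero_right n r _
  · rw [Polynomial.notMem_support_iff] at hc
    rw [hc]
    exact lie_zero_left n r _
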